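/- Let B be a block, G the graph obtained by attaching whiskers to vertices v_1, ..., v_k of B, and assume G is combinatorially unmixed. Let v be one of the v_i. If every vertex of N_B(v) (the neighbors of v inside B) is itself one of the whiskered vertices v_1, ..., v_k, then N_B[v] = V(B), i.e., v together with its neighbors in B is all of V(B). -/

import Mathlib

open SimpleGraph Finset

variable {V : Type*}

/-- Number of connected components of the induced subgraph on the complement of `S`. -/
noncomputable def ncomp (G : SimpleGraph V) (S : Finset V) : ℕ :=
  Nat.card ((G.induce {v | v ∉ S}).ConnectedComponent)

/-- `S` is a cut set of `G`. -/
def cutSet [DecidableEq V] (G : SimpleGraph V) (S : Finset V) : Prop :=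
  S = ∅ ∨ ∀ i ∈ S, ncomp G (S.erase i) < ncomp G S

/-- `G` is combinatorially unmixed. -/
def unmixed [DecidableEq V] (G : SimpleGraph V) : Prop :=
  G.Connected ∧ ∀ S : Finset V, cutSet G S → ncomp G S = S.card + 1

/-- `G` is accessible. -/
def accessible [DecidableEq V] (G : SimpleGraph V) : Prop :=
  unmixed G ∧ ∀ S : Finset V, cutSet G S → S ≠ ∅ → ∃ s ∈ S, cutSet G (S.erase s)

/-- A block: connected with no cut vertices. -/
def isBlock [DecidableEq V] (G : SimpleGraph V) : Prop :=
  G.Connected ∧ ∀ v : V, ¬ cutSet G {v}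

/-- The graph obtained from `B` by attaching a whisker (pendant leaf) at each `f i`. -/
def whisker {k : ℕ} (B : SimpleGraph V) (f : Fin k → V) : SimpleGraph (V ⊕ Fin k) :=
  SimpleGraph.fromRel (fun x y => match x, y with
    | Sum.inl a, Sum.inl b => B.Adj a b
    | Sum.inl a, Sum.inr i => a = f i
    | _, _ => False)

/-- A free vertex: a vertex contained in a unique maximal clique. -/
def freeVertex (G : SimpleGraph V) (v : V) : Prop :=
  ∃! s : Set V, v ∈ s ∧ G.IsClique s ∧ ∀ t, G.IsClique t → s ⊆ t → s = t

private lemma mem_of_reachable_aux {X : Type*} {H : SimpleGraph X} {C : Set X}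
    (hC : ∀ a b, a ∈ C → H.Adj a b → b ∈ C) {x y : X} (hr : H.Reachable x y) :
    x ∈ C → y ∈ C := by
  obtain ⟨w⟩ := hr
  induction w with
  | nil => exact id
  | cons hadj p ih => exact fun hx => ih (hC _ _ hx hadj)

private lemma whisker_adj_iff {k : ℕ} (B : SimpleGraph V) (f : Fin k → V) :
    ∀ x y : V ⊕ Fin k, (whisker B f).Adj x y ↔
      ((∃ a b, x = Sum.inl a ∧ y = Sum.inl b ∧ B.Adj a b) ∨
       (∃ a j, x = Sum.inl a ∧ y = Sum.inr j ∧ a = f j) ∨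
       (∃ a j, x = Sum.inr j ∧ y = Sum.inl a ∧ a = f j)) := by
  intro x y
  constructor
  · intro hxy
    rw [whisker, SimpleGraph.fromRel_adj] at hxy
    obtain ⟨hne, hrel⟩ := hxy
    rcases x with a | j <;> rcases y with b | j'
    · rcases hrel with hr | hr
      · exact Or.inl ⟨a, b, rfl, rfl, hr⟩
      · exact Or.inl ⟨a, b, rfl, rfl, hr.symm⟩
    · rcases hrel with hr | hr
      · exact Or.inr (Or.inl ⟨a, j', rfl, rfl, hr⟩)
      · exact hr.elim
    · rcases hrel with hr | hr
      · exact hr.elim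
      · exact Or.inr (Or.inr ⟨b, j, rfl, rfl, hr⟩)
    · rcases hrel with hr | hr <;> exact hr.elim
  · intro hxy
    rw [whisker, SimpleGraph.fromRel_adj]
    rcases hxy with ⟨a, b, rfl, rfl, hab⟩ | ⟨a, j, rfl, rfl, rfl⟩ | ⟨a, j, rfl, rfl, rfl⟩
    · exact ⟨by simp [hab.ne], Or.inl hab⟩
    · exact ⟨by simp, Or.inl rfl⟩
    · exact ⟨by simp, Or.inr rfl⟩

theorem neighbors_all_whiskered_closed_nbhd_eq_univ [Fintype V] [DecidableEq V] {k : ℕ}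
    (B : SimpleGraph V) (hB : isBlock B) (f : Fin k → V) (hf : Function.Injective f)
    (hu : unmixed (whisker B f)) (i : Fin k)
    (h : ∀ u, B.Adj (f i) u → u ∈ Set.range f) :
    ∀ u : V, u = f i ∨ B.Adj (f i) u := by
  classical
  intro u
  by_contra hcon
  push_neg at hcon
  obtain ⟨hne, hnadj⟩ := hcon
  set G := whisker B f with hGdef
  set N : Finset V := Finset.univ.filter (fun a => B.Adj (f i) a) with hNdef
  set T : Finset (V ⊕ Fin k) := N.image Sum.inl with hTdef
  set J : Finset (Fin k) := Finset.univ.filter (fun j => B.Adj (f i) (f j)) with hJdef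
  have memN : ∀ a : V, a ∈ N ↔ B.Adj (f i) a := by intro a; simp [hNdef]
  have memTl : ∀ a : V, Sum.inl a ∈ T ↔ B.Adj (f i) a := by
    intro a
    simp [hTdef, memN]
  have memTr : ∀ j : Fin k, Sum.inr j ∉ T := by intro j; simp [hTdef]
  have hTcard : T.card = N.card := Finset.card_image_of_injective _ Sum.inl_injective
  have hJcard : J.card = N.card := by
    apply Finset.card_bij (fun j _ => f j)
    · intro j hj; rw [memN]; exact (Finset.mem_filter.mp hj).2
    · intro j1 h1 j2 h2 he; exact hf he
    · intro a ha
      obtain ⟨j, rfl⟩ := h a ((memN a).mp ha)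
      exact ⟨j, Finset.mem_filter.mpr ⟨Finset.mem_univ _, (memN _).mp ha⟩, rfl⟩
  have hvnot : Sum.inl (f i) ∈ {w : V ⊕ Fin k | w ∉ T} := by
    simp only [Set.mem_setOf_eq, memTl]
    exact B.irrefl
  have hunot : Sum.inl u ∈ {w : V ⊕ Fin k | w ∉ T} := by
    simp only [Set.mem_setOf_eq, memTl]
    exact hnadj
  set H := G.induce {w : V ⊕ Fin k | w ∉ T} with hHdef
  set xv : ↥{w : V ⊕ Fin k | w ∉ T} := ⟨Sum.inl (f i), hvnot⟩ with hxv
  set xu : ↥{w : V ⊕ Fin k | w ∉ T} := ⟨Sum.inl u, hunot⟩ with hxu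
  set xw : Fin k → ↥{w : V ⊕ Fin k | w ∉ T} := fun j => ⟨Sum.inr j, memTr j⟩ with hxw
  have hHadj : ∀ a b : ↥{w : V ⊕ Fin k | w ∉ T}, H.Adj a b ↔ G.Adj a.1 b.1 :=
    fun a b => Iff.rfl
  -- (A) the component of a whisker leaf of a removed vertex is a singleton
  have hAj : ∀ j, j ∈ J → ∀ y, H.Reachable (xw j) y → y = xw j := by
    intro j hj y hr
    have hjadj : B.Adj (f i) (f j) := (Finset.mem_filter.mp hj).2
    have key : y ∈ ({xw j} : Set _) := by
      refine mem_of_reachable_aux (fun a b ha hab => ?_) hr rfl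
      rw [Set.mem_singleton_iff] at ha; subst ha
      rw [hHadj] at hab
      rcases (whisker_adj_iff B f _ _).mp hab with
        ⟨a', b', h1, h2, h3⟩ | ⟨a', j', h1, h2, h3⟩ | ⟨a', j', h1, h2, h3⟩
      · exact absurd h1 (by simp [hxw])
      · exact absurd h1 (by simp [hxw])
      · have hj' : j' = j := by
          have : (Sum.inr j : V ⊕ Fin k) = Sum.inr j' := h1
          exact (Sum.inr.injEq _ _ ▸ this).symm
        subst hj'; subst h3
        exfalso
        exact b.2 (by rw [h2, memTl]; exact hjadj)
    exact key
  -- (B) the component of `f i` is contained in `{f i, its leaf}`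
  have hAv : ∀ y, H.Reachable xv y → y = xv ∨ y = xw i := by
    intro y hr
    have key : y ∈ ({xv, xw i} : Set _) := by
      refine mem_of_reachable_aux (fun a b ha hab => ?_) hr (by simp)
      rw [hHadj] at hab
      rcases ha with ha | ha
      · -- a = xv
        subst ha
        rcases (whisker_adj_iff B f _ _).mp hab with
          ⟨a', b', h1, h2, h3⟩ | ⟨a', j', h1, h2, h3⟩ | ⟨a', j', h1, h2, h3⟩
        · have : a' = f i := Sum.inl_injective h1.symm
          subst this
          exact absurd (b.2) (by rw [h2]; simp only [Set.mem_setOf_eq, memTl, not_not]; exact h3)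
        · have : a' = f i := Sum.inl_injective h1.symm
          subst this
          have : j' = i := hf h3.symm
          subst this
          right; exact Subtype.ext h2
        · exact absurd h1 (by simp)
      · -- a = xw i
        rw [Set.mem_singleton_iff] at ha
        subst ha
        rcases (whisker_adj_iff B f _ _).mp hab with
          ⟨a', b', h1, h2, h3⟩ | ⟨a', j', h1, h2, h3⟩ | ⟨a', j', h1, h2, h3⟩
        · exact absurd h1 (by simp [hxw])
        · exact absurd h1 (by simp [hxw])
        · have : j' = i := by
            have : (Sum.inr i : V ⊕ Fin k) = Sum.inr j' := h1
            exact (Sum.inr.injEq _ _ ▸ this).symm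
          subst this; subst h3
          left; exact Subtype.ext h2
    simpa using key
  haveI : Finite H.ConnectedComponent := Quot.finite _
  -- lower bound on number of components
  have hlow : J.card + 2 ≤ ncomp G T := by
    have hΦinj : Function.Injective
        (fun x : ↥J ⊕ Bool => match x with
          | Sum.inl j => H.connectedComponentMk (xw j.1)
          | Sum.inr true => H.connectedComponentMk xv
          | Sum.inr false => H.connectedComponentMk xu) := by
      rintro (⟨j, hj⟩ | (b | b)) (⟨j', hj'⟩ | (b' | b')) heq <;>
        simp only [SimpleGraph.ConnectedComponent.eq] at heq
      · -- inl inl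
        have := hAj j hj _ heq
        have hjj : (Sum.inr j' : V ⊕ Fin k) = Sum.inr j := congrArg Subtype.val this
        simp only [Sum.inr.injEq] at hjj
        simp [hjj]
      · -- inl j vs inr false (xu)
        exact absurd (congrArg Subtype.val (hAj j hj _ heq)) (by simp [hxw, hxu])
      · -- inl j vs inr true (xv)
        exact absurd (congrArg Subtype.val (hAj j hj _ heq)) (by simp [hxw, hxv])
      · -- inr false vs inl j'
        exact absurd (congrArg Subtype.val (hAj j' hj' _ heq.symm)) (by simp [hxw, hxu])
      · rfl
      · -- xu vs xv : Reachable xu xv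
        rcases hAv _ heq.symm with hc | hc
        · exact absurd (congrArg Subtype.val hc) (by simp [hxu, hxv, hne])
        · exact absurd (congrArg Subtype.val hc) (by simp [hxu, hxw])
      · -- inr true vs inl j'
        exact absurd (congrArg Subtype.val (hAj j' hj' _ heq.symm)) (by simp [hxw, hxv])
      · -- xv vs xu
        rcases hAv _ heq with hc | hc
        · have hcc := congrArg Subtype.val hc
          simp only [hxu, hxv, Sum.inl.injEq] at hcc
          first | exact absurd hcc hne | exact absurd hcc.symm hne
        · exact absurd (congrArg Subtype.val hc) (by simp [hxu, hxw])
      · rfl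
    have hcard := Nat.card_le_card_of_injective _ hΦinj
    have : Nat.card (↥J ⊕ Bool) = J.card + 2 := by
      rw [Nat.card_sum]
      simp [Nat.card_eq_fintype_card]
    rw [this] at hcard
    exact hcard
  -- T is a cut set
  have hcut : cutSet G T := by
    right
    intro t ht
    obtain ⟨a, rfl, hadj⟩ : ∃ a, t = Sum.inl a ∧ B.Adj (f i) a := by
      rcases t with a | j
      · exact ⟨a, rfl, (memTl a).mp ht⟩
      · exact absurd ht (memTr j)
    obtain ⟨j, rfl⟩ := h a hadj
    have hjJ : j ∈ J := Finset.mem_filter.mpr ⟨Finset.mem_univ _, hadj⟩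
    set H' := G.induce {w : V ⊕ Fin k | w ∉ T.erase (Sum.inl (f j))} with hH'def
    haveI : Finite H'.ConnectedComponent := Quot.finite _
    have hsub : ∀ w : V ⊕ Fin k, w ∉ T → w ∉ T.erase (Sum.inl (f j)) :=
      fun w hw hw' => hw (Finset.mem_of_mem_erase hw')
    let hom : H →g H' := ⟨fun x => ⟨x.1, hsub _ x.2⟩, fun hab => hab⟩
    have hfjnot : (Sum.inl (f j) : V ⊕ Fin k) ∈ {w : V ⊕ Fin k | w ∉ T.erase (Sum.inl (f j))} := by
      simp
    have hfinot : (Sum.inl (f i) : V ⊕ Fin k) ∈ {w : V ⊕ Fin k | w ∉ T.erase (Sum.inl (f j))} :=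
      hsub _ hvnot
    set Φm := SimpleGraph.ConnectedComponent.map hom with hΦm
    have hsurj : Function.Surjective Φm := by
      intro c
      obtain ⟨y, rfl⟩ := c.exists_rep
      by_cases hy : (y : V ⊕ Fin k) ∈ T
      · have hyt : (y : V ⊕ Fin k) = Sum.inl (f j) := by
          by_contra hne'
          exact y.2 (Finset.mem_erase.mpr ⟨hne', hy⟩)
        refine ⟨H.connectedComponentMk xv, ?_⟩
        rw [hΦm, SimpleGraph.ConnectedComponent.map_mk]
        apply SimpleGraph.ConnectedComponent.sound
        have hadj' : H'.Adj (hom xv) y := by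
          show G.Adj (Sum.inl (f i)) (y : V ⊕ Fin k)
          rw [hyt]
          exact (whisker_adj_iff B f _ _).mpr (Or.inl ⟨f i, f j, rfl, rfl, hadj⟩)
        exact hadj'.reachable
      · refine ⟨H.connectedComponentMk ⟨y.1, hy⟩, ?_⟩
        rw [hΦm, SimpleGraph.ConnectedComponent.map_mk]
        congr 1
    have hninj : ¬ Function.Injective Φm := by
      intro hinj
      have heq : Φm (H.connectedComponentMk (xw j)) = Φm (H.connectedComponentMk xv) := by
        rw [hΦm, SimpleGraph.ConnectedComponent.map_mk, SimpleGraph.ConnectedComponent.map_mk]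
        apply SimpleGraph.ConnectedComponent.sound
        have h1 : H'.Adj (hom (xw j)) ⟨Sum.inl (f j), hfjnot⟩ := by
          show G.Adj (Sum.inr j) (Sum.inl (f j))
          exact (whisker_adj_iff B f _ _).mpr (Or.inr (Or.inr ⟨f j, j, rfl, rfl, rfl⟩))
        have h2 : H'.Adj (⟨Sum.inl (f j), hfjnot⟩ : ↥{w : V ⊕ Fin k | w ∉ T.erase (Sum.inl (f j))})
            (hom xv) := by
          show G.Adj (Sum.inl (f j)) (Sum.inl (f i))
          exact (whisker_adj_iff B f _ _).mpr (Or.inl ⟨f j, f i, rfl, rfl, hadj.symm⟩)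
        exact h1.reachable.trans h2.reachable
      have := hinj heq
      rw [SimpleGraph.ConnectedComponent.eq] at this
      have := hAj j hjJ _ this
      exact absurd (congrArg Subtype.val this) (by simp [hxw, hxv])
    haveI F1 : Fintype H.ConnectedComponent := Fintype.ofFinite _
    haveI F2 : Fintype H'.ConnectedComponent := Fintype.ofFinite _
    have hlt := Fintype.card_lt_of_surjective_not_injective Φm hsurj hninj
    show ncomp G (T.erase (Sum.inl (f j))) < ncomp G T
    unfold ncomp
    rw [Nat.card_eq_fintype_card, Nat.card_eq_fintype_card]
    exact hlt
  have hum := hu.2 T hcut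
  rw [hum, hTcard, ← hJcard] at hlow
  omega
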